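/- Binomial-SYT identity: fix a partition μ and an integer p with p + |μ| ≥ 0, and let a = min{ i ∈ ℕ : p ≥ μ'_i - i } where μ' is the conjugate partition. Define the shape μ^{(p)} by specifying its columns: (μ^{(p)})'_i = μ'_i - 1 for i < a, = p + a - 1 for i = a, and = μ'_{i-1} for i > a. Then (-1)^{a+1} f^{μ^{(p)}} = ∑_{i=0}^{|μ|} (-1)^i C(p+|μ|, p+i) f^{μ/(i)}, with the convention that f^α = 0 when α is not a valid (skew) partition shape. -/

import Mathlib

open MvPolynomial Finset
open scoped Classical

/-- The Schur polynomial in `n` variables indexed by a Young diagram `μ`: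
the sum over all semistandard fillings of the cells of `μ` with values in `Fin n`
(weakly increasing along rows, strictly increasing down columns) of the product
of the corresponding variables. -/
noncomputable def schur (μ : YoungDiagram) (n : ℕ) : MvPolynomial (Fin n) ℚ :=
  ∑ T : μ.cells → Fin n,
    if ((∀ a b : μ.cells, a.1.1 = b.1.1 → a.1.2 ≤ b.1.2 → T a ≤ T b) ∧
        (∀ a b : μ.cells, a.1.2 = b.1.2 → a.1.1 < b.1.1 → T a < T b))
    then ∏ c, MvPolynomial.X (T c) else 0

/-- Chern plethysm `\overline{s}_λ(x_1,…,x_n)`: the Schur polynomial `s_λ` evaluated at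
the `n` quantities `(x_1+⋯+x_n) - x_i`. -/
noncomputable def sbar (μ : YoungDiagram) (n : ℕ) : MvPolynomial (Fin n) ℚ :=
  MvPolynomial.aeval (fun i : Fin n => (∑ j : Fin n, X j) - X i) (schur μ n)

/-- The number of standard fillings of a finite set `s` of cells: bijective fillings by
`0, 1, …, |s|-1` that strictly increase along rows and down columns. -/
noncomputable def sytCountCells (s : Finset (ℕ × ℕ)) : ℕ :=
  Nat.card {T : s → ℕ //
    Function.Injective T ∧ (∀ x, T x < s.card) ∧
    (∀ a b : s, a.1.1 = b.1.1 → a.1.2 < b.1.2 → T a < T b) ∧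
    (∀ a b : s, a.1.2 = b.1.2 → a.1.1 < b.1.1 → T a < T b)}

/-- `f^{λ/μ}`: the number of standard Young tableaux of skew shape `λ/μ`,
with the convention that it is `0` if `μ ⊄ λ`. -/
noncomputable def sytSkew (lam nu : YoungDiagram) : ℕ :=
  if nu ≤ lam then sytCountCells (lam.cells \ nu.cells) else 0

/-- The number of semistandard fillings of a finite set `s` of cells with entries in
`{lo, …, hi}` (weakly increasing along rows, strictly increasing down columns). -/
noncomputable def ssytCountCells (s : Finset (ℕ × ℕ)) (lo hi : ℕ) : ℕ :=
  Nat.card {T : s → ℕ //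
    (∀ x, lo ≤ T x ∧ T x ≤ hi) ∧
    (∀ a b : s, a.1.1 = b.1.1 → a.1.2 ≤ b.1.2 → T a ≤ T b) ∧
    (∀ a b : s, a.1.2 = b.1.2 → a.1.1 < b.1.1 → T a < T b)}

/-- The single-row Young diagram `(k)`. -/
noncomputable def rowD (k : ℕ) : YoungDiagram :=
  YoungDiagram.ofRowLens [k] (List.Pairwise.sortedGE (List.pairwise_singleton _ k))

/-- The single-column Young diagram `(1^k)`. -/
noncomputable def colD (k : ℕ) : YoungDiagram := (rowD k).transpose

/-- The binomial coefficient `C(m, k)` for integer arguments, equal to `0` unless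
`0 ≤ k ≤ m`. -/
def zchoose (m k : ℤ) : ℤ :=
  if 0 ≤ k ∧ k ≤ m then (m.toNat.choose k.toNat : ℤ) else 0


open Finset Matrix

noncomputable def fi (m : ℤ) : ℚ := if 0 ≤ m then ((m.toNat).factorial : ℚ)⁻¹ else 0

lemma fi_neg {m : ℤ} (h : m < 0) : fi m = 0 := if_neg (by omega)

lemma fi_of_nonneg {m : ℤ} (h : 0 ≤ m) : fi m = ((m.toNat).factorial : ℚ)⁻¹ := if_pos h

lemma fi_zero : fi 0 = 1 := by simp [fi]

lemma fi_pred (m : ℤ) : fi (m - 1) = m * fi m := by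
  rcases lt_trichotomy m 0 with h | h | h
  · rw [fi_neg h, fi_neg (by omega), mul_zero]
  · subst h; rw [fi_neg (by omega)]; simp
  · rw [fi_of_nonneg h.le, fi_of_nonneg (by omega)]
    have h1 : m.toNat = (m - 1).toNat + 1 := by omega
    have h2 : ((m - 1).toNat + 1 : ℚ) = (m : ℚ) := by
      have h5 : ((m - 1).toNat : ℤ) + 1 = m := by omega
      exact_mod_cast congrArg (Int.cast : ℤ → ℚ) h5
    rw [h1, Nat.factorial_succ]
    push_cast
    rw [h2]
    have h3 : ((m - 1).toNat.factorial : ℚ) ≠ 0 := Nat.cast_ne_zero.mpr (Nat.factorial_ne_zero _)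
    have h4 : (m : ℚ) ≠ 0 := by positivity
    field_simp

lemma det_updateRow_eq_sum {t : ℕ} (M : Matrix (Fin t) (Fin t) ℚ) (j : Fin t) (v : Fin t → ℚ) :
    (M.updateRow j v).det = ∑ k, v k * M.adjugate k j := by
  have h1 : (Mᵀ.updateCol j v).det = (M.updateRow j v).det := by
    rw [Matrix.updateCol_transpose, Matrix.det_transpose]
  rw [← h1, ← Matrix.cramer_apply, Matrix.cramer_eq_adjugate_mulVec, Matrix.mulVec,
    dotProduct, ← Matrix.adjugate_transpose]
  simp [Matrix.transpose_apply, mul_comm]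

lemma sum_det_updateRow_scaled {t : ℕ} (M : Matrix (Fin t) (Fin t) ℚ) (d : Fin t → ℚ) :
    ∑ j, (M.updateRow j (fun k => d k * M j k)).det = (∑ k, d k) * M.det := by
  have h1 : ∀ j, (M.updateRow j (fun k => d k * M j k)).det
      = ∑ k, d k * (M j k * M.adjugate k j) := by
    intro j
    rw [det_updateRow_eq_sum]
    exact Finset.sum_congr rfl fun k _ => by ring
  simp_rw [h1]
  rw [Finset.sum_comm]
  have h2 : ∀ k : Fin t, ∑ j, d k * (M j k * M.adjugate k j) = d k * M.det := by
    intro k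
    rw [← Finset.mul_sum]
    congr 1
    have := Matrix.adjugate_mul M
    have h3 : (M.adjugate * M) k k = M.det := by rw [this]; simp
    rw [← h3, Matrix.mul_apply]
    exact Finset.sum_congr rfl fun j _ => by ring
  simp_rw [h2]
  rw [← Finset.sum_mul]

namespace YoungDiagram

lemma colLen_eq_of_forall {μ : YoungDiagram} {j c : ℕ} (h1 : (c, j) ∉ μ)
    (h2 : ∀ i, i < c → (i, j) ∈ μ) : μ.colLen j = c := by
  have ha : μ.colLen j ≤ c := by
    by_contra hc
    exact h1 (mem_iff_lt_colLen.mpr (by omega))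
  have hb : c ≤ μ.colLen j := by
    rcases Nat.eq_zero_or_pos c with h | h
    · omega
    · have := mem_iff_lt_colLen.mp (h2 (c - 1) (by omega))
      omega
  omega

lemma colLen_le_of_le {x y : YoungDiagram} (h : x ≤ y) (j : ℕ) : x.colLen j ≤ y.colLen j := by
  by_contra hc
  push_neg at hc
  have hm : (y.colLen j, j) ∈ x := mem_iff_lt_colLen.mpr hc
  have : (y.colLen j, j) ∈ y := h hm
  rw [mem_iff_lt_colLen] at this
  omega

lemma card_eq_sum_colLen (lam : YoungDiagram) (t : ℕ) (h : lam.colLen t = 0) :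
    lam.card = ∑ j ∈ Finset.range t, lam.colLen j := by
  have hmem : ∀ c ∈ lam.cells, c.2 ∈ Finset.range t := by
    intro c hc
    rw [Finset.mem_range]
    by_contra hcon
    push_neg at hcon
    have h1 : lam.colLen c.2 ≤ lam.colLen t := lam.colLen_anti t c.2 hcon
    have h2 : (c.1, c.2) ∈ lam := by rwa [Prod.mk.eta]
    rw [mem_iff_lt_colLen] at h2
    omega
  rw [YoungDiagram.card, Finset.card_eq_sum_card_fiberwise hmem]
  refine Finset.sum_congr rfl fun j _ => ?_
  rw [colLen_eq_card]
  congr 1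

/-- the corner cell of column `j` -/
def boxc (lam : YoungDiagram) (j : ℕ) : ℕ × ℕ := (lam.colLen j - 1, j)

lemma eraseBox_isLowerSet {lam : YoungDiagram} {j : ℕ}
    (hcorner : lam.colLen (j + 1) < lam.colLen j) :
    IsLowerSet ((lam.cells.erase (lam.boxc j)) : Set (ℕ × ℕ)) := by
  intro x y hle hx
  simp only [Finset.coe_erase, Set.mem_diff, Finset.mem_coe, mem_cells, Set.mem_singleton_iff] at hx ⊢
  obtain ⟨hxmem, hxne⟩ := hx
  refine ⟨lam.isLowerSet hle hxmem, ?_⟩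
  rintro rfl
  -- y = boxc, y ≤ x, x ∈ lam, x ≠ boxc
  obtain ⟨hr, hc⟩ := hle
  simp only [boxc] at hr hc hxne ⊢
  -- x = (x.1, x.2), with colLen j - 1 ≤ x.1, j ≤ x.2
  rcases Nat.lt_or_ge x.1 (lam.colLen j) with h1 | h1
  · -- then x.1 = colLen j - 1; so x.2 > j
    have hx2 : j < x.2 := by
      rcases Nat.lt_or_ge j x.2 with h | h
      · exact h
      · exfalso; apply hxne; have : x.2 = j := by omega
        have : x.1 = lam.colLen j - 1 := by omega
        exact Prod.ext (by omega) (by omega)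
    have hmem2 : (lam.colLen j - 1, j + 1) ∈ lam :=
      lam.up_left_mem (by omega) (by omega) hxmem
    rw [mem_iff_lt_colLen] at hmem2
    omega
  · -- x.1 ≥ colLen j, x.2 ≥ j: (x.1, j) ∈ lam gives contradiction
    have hmem2 : (x.1, j) ∈ lam := lam.up_left_mem (le_refl _) hc hxmem
    rw [mem_iff_lt_colLen] at hmem2
    omega

/-- remove the corner box of column `j` -/
def eraseBox (lam : YoungDiagram) (j : ℕ) (hcorner : lam.colLen (j + 1) < lam.colLen j) :
    YoungDiagram :=
  ⟨lam.cells.erase (lam.boxc j), eraseBox_isLowerSet hcorner⟩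

variable {lam : YoungDiagram} {j : ℕ} (hcorner : lam.colLen (j + 1) < lam.colLen j)

lemma mem_eraseBox {x : ℕ × ℕ} : x ∈ lam.eraseBox j hcorner ↔ x ∈ lam ∧ x ≠ lam.boxc j := by
  simp [eraseBox, Finset.mem_erase, and_comm]

lemma eraseBox_le : lam.eraseBox j hcorner ≤ lam := by
  intro x hx
  exact (Finset.mem_erase.mp hx).2

lemma boxc_mem (h : 0 < lam.colLen j) : lam.boxc j ∈ lam := by
  rw [boxc, mem_iff_lt_colLen]; omega

lemma card_eraseBox : (lam.eraseBox j hcorner).card = lam.card - 1 := by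
  simp only [YoungDiagram.card, eraseBox]
  rw [Finset.card_erase_of_mem (boxc_mem (by omega))]

lemma colLen_eraseBox_self : (lam.eraseBox j hcorner).colLen j = lam.colLen j - 1 := by
  apply colLen_eq_of_forall
  · rw [mem_eraseBox]
    rintro ⟨hmem, hne⟩
    rw [mem_iff_lt_colLen] at hmem
    exact hne (by rw [boxc])
  · intro i hi
    rw [mem_eraseBox]
    constructor
    · rw [mem_iff_lt_colLen]; omega
    · rw [boxc]; intro hcon
      have := congrArg Prod.fst hcon
      simp at this; omega

lemma colLen_eraseBox_ne {j' : ℕ} (hne : j' ≠ j) :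
    (lam.eraseBox j hcorner).colLen j' = lam.colLen j' := by
  apply colLen_eq_of_forall
  · rw [mem_eraseBox]
    rintro ⟨hmem, _⟩
    rw [mem_iff_lt_colLen] at hmem
    omega
  · intro i hi
    rw [mem_eraseBox]
    refine ⟨mem_iff_lt_colLen.mpr hi, ?_⟩
    rw [boxc]; intro hcon
    exact hne (congrArg Prod.snd hcon)

lemma le_eraseBox {sig : YoungDiagram} (hle : sig ≤ lam) (hbox : sig.colLen j < lam.colLen j) :
    sig ≤ lam.eraseBox j hcorner := by
  intro x hx
  have hxl : x ∈ lam := hle hx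
  rw [mem_eraseBox]
  refine ⟨hxl, ?_⟩
  rintro rfl
  rw [boxc, mem_iff_lt_colLen] at hx
  omega

end YoungDiagram

open YoungDiagram

/-- The Aitken-type matrix in column form. -/
noncomputable def AMat (lam sig : YoungDiagram) (t : ℕ) : Matrix (Fin t) (Fin t) ℚ :=
  fun j k => fi ((lam.colLen j : ℤ) - (j : ℕ) + (k : ℕ) - sig.colLen k)

lemma AMat_det_self (lam : YoungDiagram) (t : ℕ) : (AMat lam lam t).det = 1 := by
  have htri : (AMat lam lam t).BlockTriangular id := by
    intro j k hlt
    have h1 : lam.colLen j ≤ lam.colLen k := lam.colLen_anti k j (le_of_lt hlt)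
    apply fi_neg
    have : (k : ℕ) < (j : ℕ) := hlt
    push_cast
    omega
  rw [Matrix.det_of_upperTriangular htri]
  have hdiag : ∀ j : Fin t, AMat lam lam t j j = 1 := by
    intro j
    show fi _ = 1
    have : ((lam.colLen j : ℤ) - (j : ℕ) + (j : ℕ) - lam.colLen j) = 0 := by ring
    rw [this, fi_zero]
  simp [hdiag]

lemma AMat_det_eq_zero {lam sig : YoungDiagram} {t : ℕ} (k0 : Fin t)
    (h : lam.colLen k0 < sig.colLen k0) : (AMat lam sig t).det = 0 := by
  rw [Matrix.det_apply]
  apply Finset.sum_eq_zero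
  intro σ _
  have hex : ∃ i : Fin t, i ≤ k0 ∧ k0 ≤ σ i := by
    by_contra hc
    push_neg at hc
    have hk1 : (k0 : ℕ) + 1 ≤ t := k0.2
    have hk0pos : 0 < t := lt_of_lt_of_le (Nat.succ_pos _) hk1
    let f : Fin ((k0 : ℕ) + 1) → Fin (k0 : ℕ) := fun x =>
      ⟨(σ (Fin.castLE hk1 x) : ℕ), by
        have hle : (Fin.castLE hk1 x) ≤ k0 := by
          rw [Fin.le_def]; simpa using Nat.lt_succ_iff.mp x.2
        have := hc _ hle
        exact this⟩
    have hfval : ∀ x, (f x : ℕ) = (σ (Fin.castLE hk1 x) : ℕ) := fun x => rfl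
    have hinj : Function.Injective f := by
      intro x y hxy
      have h1 : (σ (Fin.castLE hk1 x) : ℕ) = (σ (Fin.castLE hk1 y) : ℕ) := by
        rw [← hfval x, ← hfval y, hxy]
      have h2 := σ.injective (Fin.ext h1)
      have h3 : (x : ℕ) = (y : ℕ) := by simpa using congrArg Fin.val h2
      exact Fin.ext h3
    have hcard := Fintype.card_le_of_injective f hinj
    simp at hcard
  obtain ⟨i, hi, hσ⟩ := hex
  have hz : AMat lam sig t (σ i) i = 0 := by
    apply fi_neg
    have h1 : lam.colLen (σ i) ≤ lam.colLen k0 := lam.colLen_anti k0 (σ i) hσ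
    have h2 : sig.colLen k0 ≤ sig.colLen i := sig.colLen_anti i k0 hi
    have h3 : (i : ℕ) ≤ (k0 : ℕ) := hi
    have h4 : (k0 : ℕ) ≤ (σ i : ℕ) := hσ
    push_cast
    omega
  have hprod : (∏ x : Fin t, AMat lam sig t (σ x) x) = 0 :=
    Finset.prod_eq_zero (Finset.mem_univ i) hz
  rw [hprod, smul_zero]

lemma AMat_recursion (lam sig : YoungDiagram) (t : ℕ)
    (hlam : lam.colLen t = 0) (hsig : sig.colLen t = 0) :
    ((lam.card : ℚ) - (sig.card : ℚ)) * (AMat lam sig t).det =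
      ∑ j : Fin t, ((AMat lam sig t).updateRow j
        (fun k => fi ((lam.colLen j : ℤ) - 1 - (j : ℕ) + (k : ℕ) - sig.colLen k))).det := by
  set M := AMat lam sig t with hM
  have hrow : ∀ j : Fin t,
      (fun k : Fin t => fi ((lam.colLen j : ℤ) - 1 - (j : ℕ) + (k : ℕ) - sig.colLen k)) =
      (((lam.colLen j : ℚ) - (j : ℕ)) • M j) + (fun k : Fin t => (((k : ℕ) : ℚ) - sig.colLen k) * M j k) := by
    intro j
    funext k
    have h1 : ((lam.colLen j : ℤ) - 1 - (j : ℕ) + (k : ℕ) - sig.colLen k)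
        = ((lam.colLen j : ℤ) - (j : ℕ) + (k : ℕ) - sig.colLen k) - 1 := by ring
    rw [h1, fi_pred]
    show _ = ((lam.colLen j : ℚ) - ((j : ℕ) : ℚ)) * M j k
      + ((((k : ℕ) : ℚ) - sig.colLen k) * M j k)
    have hMjk : M j k = fi ((lam.colLen j : ℤ) - (j : ℕ) + (k : ℕ) - sig.colLen k) := rfl
    rw [hMjk]
    push_cast
    ring
  have hterm : ∀ j : Fin t,
      (M.updateRow j
        (fun k => fi ((lam.colLen j : ℤ) - 1 - (j : ℕ) + (k : ℕ) - sig.colLen k))).det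
      = ((lam.colLen j : ℚ) - (j : ℕ)) * M.det
        + (M.updateRow j (fun k => (((k : ℕ) : ℚ) - sig.colLen k) * M j k)).det := by
    intro j
    rw [hrow j, Matrix.det_updateRow_add, Matrix.det_updateRow_smul, Matrix.updateRow_eq_self]
  simp_rw [hterm]
  rw [Finset.sum_add_distrib, ← Finset.sum_mul, sum_det_updateRow_scaled]
  have hsum1 : ∑ j : Fin t, ((lam.colLen j : ℚ) - (j : ℕ)) = (lam.card : ℚ) - ∑ j : Fin t, ((j : ℕ) : ℚ) := by
    rw [Finset.sum_sub_distrib]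
    congr 1
    rw [lam.card_eq_sum_colLen t hlam]
    push_cast
    exact Fin.sum_univ_eq_sum_range (fun j => (lam.colLen j : ℚ)) t
  have hsum2 : ∑ k : Fin t, (((k : ℕ) : ℚ) - sig.colLen k) = (∑ k : Fin t, ((k : ℕ) : ℚ)) - sig.card := by
    rw [Finset.sum_sub_distrib]
    congr 1
    rw [sig.card_eq_sum_colLen t hsig]
    push_cast
    exact Fin.sum_univ_eq_sum_range (fun j => (sig.colLen j : ℚ)) t
  rw [hsum1, hsum2]
  ring


namespace SytAux

def SytSet (s : Finset (ℕ × ℕ)) := {T : s → ℕ //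
    Function.Injective T ∧ (∀ x, T x < s.card) ∧
    (∀ a b : s, a.1.1 = b.1.1 → a.1.2 < b.1.2 → T a < T b) ∧
    (∀ a b : s, a.1.2 = b.1.2 → a.1.1 < b.1.1 → T a < T b)}

lemma sytCountCells_eq (s : Finset (ℕ × ℕ)) : sytCountCells s = Nat.card (SytSet s) := rfl

instance instFiniteSytSet (s : Finset (ℕ × ℕ)) : Finite (SytSet s) := by
  apply Finite.of_injective
    (fun T : SytSet s => (fun x => (⟨T.1 x, Nat.lt_succ_of_lt (T.2.2.1 x)⟩ : Fin (s.card + 1))))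
  intro T1 T2 h
  apply Subtype.ext
  funext x
  have := congrFun h x
  exact congrArg Fin.val this

lemma sytCountCells_empty : sytCountCells (∅ : Finset (ℕ × ℕ)) = 1 := by
  rw [sytCountCells_eq]
  have hne : Nonempty (SytSet (∅ : Finset (ℕ × ℕ))) := by
    refine ⟨⟨fun x => 0, ?_, ?_, ?_, ?_⟩⟩
    · intro a; exact absurd a.2 (Finset.notMem_empty _)
    · intro a; exact absurd a.2 (Finset.notMem_empty _)
    · intro a; exact absurd a.2 (Finset.notMem_empty _)
    · intro a; exact absurd a.2 (Finset.notMem_empty _)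
  have hsub : Subsingleton (SytSet (∅ : Finset (ℕ × ℕ))) := by
    constructor
    intro T1 T2
    apply Subtype.ext
    funext x
    exact absurd x.2 (Finset.notMem_empty _)
  exact Nat.card_unique

end SytAux

namespace SytAux

open YoungDiagram

variable {lam sig : YoungDiagram}

lemma box_mem_sdiff (hle : sig ≤ lam) {j : ℕ} (hc : sig.colLen j < lam.colLen j) :
    lam.boxc j ∈ lam.cells \ sig.cells := by
  rw [Finset.mem_sdiff]
  constructor
  · exact boxc_mem (by omega)
  · rw [mem_cells, boxc, mem_iff_lt_colLen]
    omega

/-- Extend a tableau on `s.erase (boxc j)` by putting the largest entry in the box. -/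
noncomputable def extendT (lam sig : YoungDiagram) (j : ℕ)
    (T' : ↥((lam.cells \ sig.cells).erase (lam.boxc j)) → ℕ) :
    ↥(lam.cells \ sig.cells) → ℕ := fun x =>
  if hx : x.1 = lam.boxc j then (lam.cells \ sig.cells).card - 1
  else T' ⟨x.1, Finset.mem_erase.mpr ⟨hx, x.2⟩⟩

lemma extendT_spec (hle : sig ≤ lam) {j : ℕ}
    (hcor : lam.colLen (j + 1) < lam.colLen j) (hsg : sig.colLen j < lam.colLen j)
    (T' : SytSet ((lam.cells \ sig.cells).erase (lam.boxc j))) :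
    Function.Injective (extendT lam sig j T'.1) ∧
    (∀ x, extendT lam sig j T'.1 x < (lam.cells \ sig.cells).card) ∧
    (∀ a b : ↥(lam.cells \ sig.cells), a.1.1 = b.1.1 → a.1.2 < b.1.2 →
      extendT lam sig j T'.1 a < extendT lam sig j T'.1 b) ∧
    (∀ a b : ↥(lam.cells \ sig.cells), a.1.2 = b.1.2 → a.1.1 < b.1.1 →
      extendT lam sig j T'.1 a < extendT lam sig j T'.1 b) := by
  classical
  have hboxmem : lam.boxc j ∈ lam.cells \ sig.cells := box_mem_sdiff hle hsg
  have hmpos : 0 < (lam.cells \ sig.cells).card := Finset.card_pos.mpr ⟨_, hboxmem⟩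
  have hcardE : ((lam.cells \ sig.cells).erase (lam.boxc j)).card
      = (lam.cells \ sig.cells).card - 1 := Finset.card_erase_of_mem hboxmem
  have hbd'' : ∀ y, T'.1 y < (lam.cells \ sig.cells).card - 1 := by
    intro y
    have := T'.2.2.1 y
    omega
  have hnotright : ∀ b : ↥(lam.cells \ sig.cells),
      b.1.1 = lam.colLen j - 1 → j < b.1.2 → False := by
    intro b hb1 hb2
    have hbl : b.1 ∈ lam.cells := (Finset.mem_sdiff.mp b.2).1
    have h2 : (lam.colLen j - 1, j + 1) ∈ lam := by
      apply lam.up_left_mem (le_of_eq hb1.symm) hb2 ?_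
      rw [Prod.mk.eta]
      exact hbl
    rw [mem_iff_lt_colLen] at h2
    omega
  have hnotbelow : ∀ b : ↥(lam.cells \ sig.cells),
      b.1.2 = j → lam.colLen j - 1 < b.1.1 → False := by
    intro b hb1 hb2
    have hbl : b.1 ∈ lam.cells := (Finset.mem_sdiff.mp b.2).1
    have h2 : (b.1.1, b.1.2) ∈ lam := by rw [Prod.mk.eta]; exact hbl
    rw [mem_iff_lt_colLen, hb1] at h2
    omega
  have hval_box : ∀ (x : ↥(lam.cells \ sig.cells)), x.1 = lam.boxc j →
      extendT lam sig j T'.1 x = (lam.cells \ sig.cells).card - 1 := by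
    intro x hx
    simp only [extendT]
    rw [dif_pos hx]
  have hval_not : ∀ (x : ↥(lam.cells \ sig.cells)) (hx : x.1 ≠ lam.boxc j),
      extendT lam sig j T'.1 x = T'.1 ⟨x.1, Finset.mem_erase.mpr ⟨hx, x.2⟩⟩ := by
    intro x hx
    simp only [extendT]
    rw [dif_neg hx]
  refine ⟨?_, ?_, ?_, ?_⟩
  · intro a b hab
    by_cases ha : a.1 = lam.boxc j <;> by_cases hb : b.1 = lam.boxc j
    · exact Subtype.ext (ha.trans hb.symm)
    · rw [hval_box a ha, hval_not b hb] at hab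
      exact absurd hab.symm (Nat.ne_of_lt (hbd'' _))
    · rw [hval_not a ha, hval_box b hb] at hab
      exact absurd hab (Nat.ne_of_lt (hbd'' _))
    · rw [hval_not a ha, hval_not b hb] at hab
      have h2 := congrArg Subtype.val (T'.2.1 hab)
      exact Subtype.ext h2
  · intro x
    by_cases hx : x.1 = lam.boxc j
    · rw [hval_box x hx]; omega
    · rw [hval_not x hx]
      have := hbd'' ⟨x.1, Finset.mem_erase.mpr ⟨hx, x.2⟩⟩
      omega
  · intro a b h1 h2
    by_cases hb : b.1 = lam.boxc j
    · have ha : a.1 ≠ lam.boxc j := by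
        intro hc
        rw [hc, hb] at h2
        exact lt_irrefl _ h2
      rw [hval_box b hb, hval_not a ha]
      exact hbd'' _
    · by_cases ha : a.1 = lam.boxc j
      · exfalso
        have ha1 : a.1.1 = lam.colLen j - 1 := by rw [ha]; rfl
        have ha2 : a.1.2 = j := by rw [ha]; rfl
        have hb1 : b.1.1 = lam.colLen j - 1 := by rw [← h1, ha1]
        exact hnotright b hb1 (by omega)
      · rw [hval_not a ha, hval_not b hb]
        exact T'.2.2.2.1 _ _ h1 h2
  · intro a b h1 h2
    by_cases hb : b.1 = lam.boxc j
    · have ha : a.1 ≠ lam.boxc j := by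
        intro hc
        rw [hc, hb] at h2
        exact lt_irrefl _ h2
      rw [hval_box b hb, hval_not a ha]
      exact hbd'' _
    · by_cases ha : a.1 = lam.boxc j
      · exfalso
        have ha1 : a.1.1 = lam.colLen j - 1 := by rw [ha]; rfl
        have ha2 : a.1.2 = j := by rw [ha]; rfl
        have hb2 : b.1.2 = j := by rw [← h1, ha2]
        exact hnotbelow b hb2 (by omega)
      · rw [hval_not a ha, hval_not b hb]
        exact T'.2.2.2.2 _ _ h1 h2

theorem syt_branching (lam sig : YoungDiagram) (hle : sig ≤ lam) (t : ℕ)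
    (hne : sig.card < lam.card) (hw : lam.colLen t = 0) :
    sytCountCells (lam.cells \ sig.cells) =
      ∑ j : Fin t, if (lam.colLen ((j : ℕ) + 1) < lam.colLen (j : ℕ)
          ∧ sig.colLen (j : ℕ) < lam.colLen (j : ℕ))
        then sytCountCells ((lam.cells \ sig.cells).erase (lam.boxc (j : ℕ))) else 0 := by
  classical
  set s : Finset (ℕ × ℕ) := lam.cells \ sig.cells with hs
  set m : ℕ := s.card with hm
  have hsub : sig.cells ⊆ lam.cells := hle
  have hne' : sig.cells.card < lam.cells.card := hne
  have hmpos : 0 < m := by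
    rw [hm, hs, Finset.card_sdiff_of_subset hsub]
    omega
  set cond : Fin t → Prop :=
    fun j => lam.colLen ((j : ℕ) + 1) < lam.colLen (j : ℕ)
      ∧ sig.colLen ((j : ℕ)) < lam.colLen ((j : ℕ)) with hcond
  have hboxmem : ∀ j : Fin t, cond j → lam.boxc (j : ℕ) ∈ s := fun j hj =>
    box_mem_sdiff hle hj.2
  have hcardE : ∀ j : Fin t, cond j → (s.erase (lam.boxc (j : ℕ))).card = m - 1 := by
    intro j hj
    exact Finset.card_erase_of_mem (hboxmem j hj)
  -- the bijection
  let Ψ : (Σ j : {j : Fin t // cond j}, SytSet (s.erase (lam.boxc (j.1 : ℕ)))) → SytSet s :=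
    fun P => ⟨extendT lam sig (P.1.1 : ℕ) P.2.1, extendT_spec hle P.1.2.1 P.1.2.2 P.2⟩
  have hΨval_box : ∀ P (x : s), x.1 = lam.boxc ((P.1.1 : Fin t) : ℕ) → (Ψ P).1 x = m - 1 := by
    intro P x hx
    show extendT _ _ _ _ _ = _
    simp only [extendT]
    rw [dif_pos hx]
  have hΨval_not : ∀ P (x : s) (hx : x.1 ≠ lam.boxc ((P.1.1 : Fin t) : ℕ)),
      (Ψ P).1 x = P.2.1 ⟨x.1, Finset.mem_erase.mpr ⟨hx, x.2⟩⟩ := by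
    intro P x hx
    show extendT _ _ _ _ _ = _
    simp only [extendT]
    rw [dif_neg hx]
  have hΨbij : Function.Bijective Ψ := by
    constructor
    · -- injective
      rintro ⟨⟨j, hj⟩, T1, hT1⟩ ⟨⟨j', hj'⟩, T2, hT2⟩ hPQ
      have hjj : j = j' := by
        by_contra hne2
        have hbne : lam.boxc (j : ℕ) ≠ lam.boxc (j' : ℕ) := by
          intro hc
          apply hne2
          have := congrArg Prod.snd hc
          simp only [YoungDiagram.boxc] at this
          exact Fin.ext this
        set xb : s := ⟨lam.boxc (j : ℕ), hboxmem j hj⟩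
        have h1 : (Ψ ⟨⟨j, hj⟩, T1, hT1⟩).1 xb = m - 1 := hΨval_box _ xb rfl
        have h2 : (Ψ ⟨⟨j', hj'⟩, T2, hT2⟩).1 xb
            = T2 ⟨xb.1, Finset.mem_erase.mpr ⟨hbne, xb.2⟩⟩ := hΨval_not _ xb hbne
        have h3 : T2 ⟨xb.1, Finset.mem_erase.mpr ⟨hbne, xb.2⟩⟩ < m - 1 := by
          have := hT2.2.1 ⟨xb.1, Finset.mem_erase.mpr ⟨hbne, xb.2⟩⟩
          rw [hcardE j' hj'] at this
          exact this
        rw [congrFun (congrArg Subtype.val hPQ) xb] at h1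
        omega
      subst hjj
      have hT12 : T1 = T2 := by
        funext y
        have hyne : y.1 ≠ lam.boxc (j : ℕ) := (Finset.mem_erase.mp y.2).1
        have hymem : y.1 ∈ s := Finset.mem_of_mem_erase y.2
        have h1 : (Ψ ⟨⟨j, hj⟩, T1, hT1⟩).1 ⟨y.1, hymem⟩
            = T1 ⟨y.1, Finset.mem_erase.mpr ⟨hyne, hymem⟩⟩ := hΨval_not _ _ hyne
        have h2 : (Ψ ⟨⟨j, hj⟩, T2, hT2⟩).1 ⟨y.1, hymem⟩
            = T2 ⟨y.1, Finset.mem_erase.mpr ⟨hyne, hymem⟩⟩ := hΨval_not _ _ hyne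
        have h3 : T1 ⟨y.1, Finset.mem_erase.mpr ⟨hyne, hymem⟩⟩
            = T2 ⟨y.1, Finset.mem_erase.mpr ⟨hyne, hymem⟩⟩ := by
          rw [← h1, ← h2, congrFun (congrArg Subtype.val hPQ) ⟨y.1, hymem⟩]
        have hy : (⟨y.1, Finset.mem_erase.mpr ⟨hyne, hymem⟩⟩ : (s.erase (lam.boxc (j : ℕ)))) = y :=
          Subtype.ext rfl
        rw [hy] at h3
        exact h3
      congr 1
      exact Subtype.ext hT12
    · -- surjective
      rintro ⟨Tm, hinj, hbd, hrow, hcol⟩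
      -- find the cell with maximal entry
      let T1 : s → Fin m := fun x => ⟨Tm x, hbd x⟩
      have hT1inj : Function.Injective T1 := by
        intro a b hab
        exact hinj (congrArg Fin.val hab)
      have hT1bij : Function.Bijective T1 := by
        rw [Fintype.bijective_iff_injective_and_card]
        exact ⟨hT1inj, by simp [Fintype.card_coe, hm]⟩
      obtain ⟨x0, hx0⟩ := hT1bij.2 ⟨m - 1, by omega⟩
      have hx0v : Tm x0 = m - 1 := congrArg Fin.val hx0
      have hx0lam : x0.1 ∈ lam.cells := (Finset.mem_sdiff.mp x0.2).1
      have hx0sig : x0.1 ∉ sig.cells := (Finset.mem_sdiff.mp x0.2).2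
      have hmax : ∀ y : s, y ≠ x0 → Tm y < m - 1 := by
        intro y hy
        have h1 : Tm y ≠ m - 1 := by
          intro hc
          exact hy (hinj (hc.trans hx0v.symm))
        have := hbd y
        omega
      set r : ℕ := x0.1.1 with hr
      set c : ℕ := x0.1.2 with hc
      have hx0pair : x0.1 = (r, c) := by rw [hr, hc]
      -- no cell of lam directly below x0
      have hbelow : (r + 1, c) ∉ lam := by
        intro hmem
        have hnsig : (r + 1, c) ∉ sig.cells := by
          intro hs2
          exact hx0sig (by
            have := sig.up_left_mem (Nat.le_succ r) (le_refl c) hs2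
            rwa [← hx0pair] at this)
        have hyS : ((r + 1, c) : ℕ × ℕ) ∈ s := Finset.mem_sdiff.mpr ⟨hmem, hnsig⟩
        have hyne : (⟨(r + 1, c), hyS⟩ : s) ≠ x0 := by
          intro hc2
          have := congrArg (fun z : s => z.1.1) hc2
          simp only [hx0pair] at this
          omega
        have hlt := hcol x0 ⟨(r + 1, c), hyS⟩ (by simp [hx0pair]) (by simp [hx0pair])
        have := hmax _ hyne
        omega
      have hright : (r, c + 1) ∉ lam := by
        intro hmem
        have hnsig : (r, c + 1) ∉ sig.cells := by
          intro hs2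
          exact hx0sig (by
            have := sig.up_left_mem (le_refl r) (Nat.le_succ c) hs2
            rwa [← hx0pair] at this)
        have hyS : ((r, c + 1) : ℕ × ℕ) ∈ s := Finset.mem_sdiff.mpr ⟨hmem, hnsig⟩
        have hyne : (⟨(r, c + 1), hyS⟩ : s) ≠ x0 := by
          intro hc2
          have := congrArg (fun z : s => z.1.2) hc2
          simp only [hx0pair] at this
          omega
        have hlt := hrow x0 ⟨(r, c + 1), hyS⟩ (by simp [hx0pair]) (by simp [hx0pair])
        have := hmax _ hyne
        omega
      have hclen : lam.colLen c = r + 1 := by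
        have h1 : (r, c) ∈ lam := by rw [← hx0pair]; exact hx0lam
        rw [mem_iff_lt_colLen] at h1
        have h2 : ¬ (r + 1 < lam.colLen c) := fun hcon => hbelow (mem_iff_lt_colLen.mpr hcon)
        omega
      have hcorner : lam.colLen (c + 1) < lam.colLen c := by
        have h2 : ¬ (r < lam.colLen (c + 1)) := fun hcon => hright (mem_iff_lt_colLen.mpr hcon)
        omega
      have hsigc : sig.colLen c < lam.colLen c := by
        have h1 : ¬ (r < sig.colLen c) := by
          intro hcon
          exact hx0sig (by rw [hx0pair]; exact mem_iff_lt_colLen.mpr hcon)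
        omega
      have hct : c < t := by
        by_contra hcon
        push_neg at hcon
        have := lam.colLen_anti t c hcon
        omega
      have hbox : lam.boxc c = x0.1 := by
        have hb0 : lam.boxc c = (lam.colLen c - 1, c) := rfl
        rw [hb0, hclen, hx0pair]
        simp
      set jF : Fin t := ⟨c, hct⟩ with hjF
      have hcondj : cond jF := ⟨hcorner, hsigc⟩
      -- restricted tableau
      set E : Finset (ℕ × ℕ) := s.erase (lam.boxc c) with hE
      let T'' : E → ℕ := fun y => Tm ⟨y.1, Finset.mem_of_mem_erase y.2⟩
      have hlift_ne : ∀ y : E, (⟨y.1, Finset.mem_of_mem_erase y.2⟩ : s) ≠ x0 := by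
        intro y hcon
        have h1 : y.1 = x0.1 := congrArg Subtype.val hcon
        exact (Finset.mem_erase.mp y.2).1 (h1.trans hbox.symm)
      have hT''spec : Function.Injective T'' ∧ (∀ y, T'' y < E.card) ∧
          (∀ a b : E, a.1.1 = b.1.1 → a.1.2 < b.1.2 → T'' a < T'' b) ∧
          (∀ a b : E, a.1.2 = b.1.2 → a.1.1 < b.1.1 → T'' a < T'' b) := by
        refine ⟨?_, ?_, ?_, ?_⟩
        · intro a b hab
          have h2 := congrArg Subtype.val (hinj hab)
          exact Subtype.ext h2
        · intro y
          have h1 := hmax _ (hlift_ne y)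
          have h2 : E.card = m - 1 := by
            rw [hE]
            exact Finset.card_erase_of_mem (box_mem_sdiff hle hsigc)
          show Tm ⟨y.1, Finset.mem_of_mem_erase y.2⟩ < E.card
          omega
        · intro a b h1 h2
          exact hrow _ _ h1 h2
        · intro a b h1 h2
          exact hcol _ _ h1 h2
      refine ⟨⟨⟨jF, hcondj⟩, ⟨T'', hT''spec⟩⟩, ?_⟩
      apply Subtype.ext
      funext x
      by_cases hx : x.1 = lam.boxc c
      · rw [hΨval_box _ x hx]
        have hxx0 : x = x0 := Subtype.ext (hx.trans hbox)
        rw [hxx0]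
        exact hx0v.symm
      · rw [hΨval_not _ x hx]
  -- count
  rw [sytCountCells_eq, ← Nat.card_eq_of_bijective Ψ hΨbij]
  letI : ∀ j : {j : Fin t // cond j}, Fintype (SytSet (s.erase (lam.boxc (j.1 : ℕ)))) :=
    fun j => Fintype.ofFinite _
  letI : Fintype {j : Fin t // cond j} := Fintype.ofFinite _
  rw [Nat.card_eq_fintype_card, Fintype.card_sigma]
  have hstep : ∀ j : {j : Fin t // cond j},
      Fintype.card (SytSet (s.erase (lam.boxc (j.1 : ℕ))))
        = sytCountCells (s.erase (lam.boxc (j.1 : ℕ))) := by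
    intro j
    rw [sytCountCells_eq, Nat.card_eq_fintype_card]
  simp_rw [hstep]
  have hsum : ∑ j : {j : Fin t // cond j}, sytCountCells (s.erase (lam.boxc (j.1 : ℕ)))
      = ∑ j ∈ Finset.univ.filter cond, sytCountCells (s.erase (lam.boxc (j : ℕ))) := by
    symm
    apply Finset.sum_subtype
    intro x
    simp
  rw [hsum, Finset.sum_filter]

end SytAux

open SytAux YoungDiagram

theorem aitken : ∀ (m : ℕ) (lam sig : YoungDiagram) (t : ℕ), sig ≤ lam →
    lam.card = sig.card + m → lam.colLen t = 0 →
    (sytCountCells (lam.cells \ sig.cells) : ℚ)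
      = (m.factorial : ℚ) * (AMat lam sig t).det := by
  intro m
  induction m with
  | zero =>
    intro lam sig t hle hcard hw
    have hsub : sig.cells ⊆ lam.cells := hle
    have hcells : sig.cells = lam.cells :=
      Finset.eq_of_subset_of_card_le hsub (by
        have h1 : lam.card = lam.cells.card := rfl
        have h2 : sig.card = sig.cells.card := rfl
        omega)
    have hlam : lam = sig := by
      ext x
      rw [hcells]
    subst hlam
    rw [Finset.sdiff_self, sytCountCells_empty, AMat_det_self]
    simp
  | succ m ih =>
    intro lam sig t hle hcard hw
    have hsub : sig.cells ⊆ lam.cells := hle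
    have hne : sig.card < lam.card := by omega
    have hsigw : sig.colLen t = 0 := by
      have := colLen_le_of_le hle t
      omega
    rw [syt_branching lam sig hle t hne hw]
    have hrec := AMat_recursion lam sig t hw hsigw
    have key : ∀ j : Fin t,
        (if (lam.colLen ((j : ℕ) + 1) < lam.colLen (j : ℕ)
            ∧ sig.colLen (j : ℕ) < lam.colLen (j : ℕ))
          then ((sytCountCells ((lam.cells \ sig.cells).erase (lam.boxc (j : ℕ))) : ℚ)) else 0)
        = (m.factorial : ℚ) * ((AMat lam sig t).updateRow j
            (fun k => fi ((lam.colLen (j : ℕ) : ℤ) - 1 - ((j : Fin t) : ℕ)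
              + ((k : Fin t) : ℕ) - sig.colLen (k : ℕ)))).det := by
      intro j
      by_cases hcor : lam.colLen ((j : ℕ) + 1) < lam.colLen (j : ℕ)
      · -- valid corner: the updated matrix is `AMat (eraseBox lam j) sig t`
        have hmatrix : (AMat lam sig t).updateRow j
            (fun k => fi ((lam.colLen (j : ℕ) : ℤ) - 1 - ((j : Fin t) : ℕ)
              + ((k : Fin t) : ℕ) - sig.colLen (k : ℕ)))
            = AMat (lam.eraseBox (j : ℕ) hcor) sig t := by
          funext j' k
          rw [Matrix.updateRow_apply]
          by_cases hj' : j' = j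
          · subst hj'
            rw [if_pos rfl]
            show fi _ = fi _
            congr 1
            rw [colLen_eraseBox_self hcor]
            have h1 : 0 < lam.colLen (j' : ℕ) := by omega
            push_cast [Nat.cast_sub (by omega : 1 ≤ lam.colLen (j' : ℕ))]
            ring
          · rw [if_neg hj']
            show fi _ = fi _
            congr 1
            rw [colLen_eraseBox_ne hcor (fun hc => hj' (Fin.ext hc))]
        rw [hmatrix]
        by_cases hcs : sig.colLen (j : ℕ) < lam.colLen (j : ℕ)
        · rw [if_pos ⟨hcor, hcs⟩]
          have hE : (lam.cells \ sig.cells).erase (lam.boxc (j : ℕ))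
              = (lam.eraseBox (j : ℕ) hcor).cells \ sig.cells := by
            ext x
            simp only [Finset.mem_erase, Finset.mem_sdiff, eraseBox]
            tauto
          rw [hE]
          apply ih
          · exact le_eraseBox hcor hle hcs
          · rw [card_eraseBox hcor]
            have h1 : lam.card = lam.cells.card := rfl
            have h2 : sig.card = sig.cells.card := rfl
            omega
          · have h1 := colLen_le_of_le (eraseBox_le hcor) t
            omega
        · rw [if_neg (fun hc => hcs hc.2)]
          have hdet : (AMat (lam.eraseBox (j : ℕ) hcor) sig t).det = 0 := by
            apply AMat_det_eq_zero j
            rw [colLen_eraseBox_self hcor]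
            omega
          rw [hdet, mul_zero]
      · -- not a corner
        rw [if_neg (fun hc => hcor hc.1)]
        have hzero : ((AMat lam sig t).updateRow j
            (fun k => fi ((lam.colLen (j : ℕ) : ℤ) - 1 - ((j : Fin t) : ℕ)
              + ((k : Fin t) : ℕ) - sig.colLen (k : ℕ)))).det = 0 := by
          have heq : lam.colLen ((j : ℕ) + 1) = lam.colLen (j : ℕ) := by
            have := lam.colLen_anti (j : ℕ) ((j : ℕ) + 1) (Nat.le_succ _)
            omega
          by_cases hjt : (j : ℕ) + 1 < t
          · -- equal rows
            have hrow : (fun k : Fin t => fi ((lam.colLen (j : ℕ) : ℤ) - 1 - ((j : Fin t) : ℕ)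
                + ((k : Fin t) : ℕ) - sig.colLen (k : ℕ)))
                = AMat lam sig t ⟨(j : ℕ) + 1, hjt⟩ := by
              funext k
              show fi _ = fi _
              congr 1
              rw [← heq]
              push_cast
              ring
            rw [hrow]
            exact Matrix.det_updateRow_eq_zero (fun hc => by
              have := congrArg Fin.val hc
              simp at this)
          · -- last row becomes zero
            have hjt' : (j : ℕ) + 1 = t := by
              have := j.2
              omega
            have hL0 : lam.colLen (j : ℕ) = 0 := by
              rw [← heq, hjt', hw]
            apply Matrix.det_eq_zero_of_row_eq_zero j
            intro k
            rw [Matrix.updateRow_self]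
            apply fi_neg
            have hk : (k : ℕ) < t := k.2
            have : (k : ℕ) ≤ (j : ℕ) := by omega
            push_cast [hL0]
            omega
        rw [hzero, mul_zero]
    calc ((∑ j : Fin t, if (lam.colLen ((j : ℕ) + 1) < lam.colLen (j : ℕ)
            ∧ sig.colLen (j : ℕ) < lam.colLen (j : ℕ))
          then sytCountCells ((lam.cells \ sig.cells).erase (lam.boxc (j : ℕ))) else 0 : ℕ) : ℚ)
        = ∑ j : Fin t, (m.factorial : ℚ) * ((AMat lam sig t).updateRow j
            (fun k => fi ((lam.colLen (j : ℕ) : ℤ) - 1 - ((j : Fin t) : ℕ)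
              + ((k : Fin t) : ℕ) - sig.colLen (k : ℕ)))).det := by
          push_cast
          exact Finset.sum_congr rfl fun j _ => key j
      _ = (m.factorial : ℚ) * (((lam.card : ℚ) - sig.card) * (AMat lam sig t).det) := by
          rw [← Finset.mul_sum, ← hrec]
      _ = ((m + 1).factorial : ℚ) * (AMat lam sig t).det := by
          have h1 : ((lam.card : ℚ) - sig.card) = (m + 1 : ℕ) := by
            have : lam.card = sig.card + (m + 1) := hcard
            rw [this]
            push_cast
            ring
          rw [h1, Nat.factorial_succ]
          push_cast
          ring

lemma mem_rowD {k : ℕ} {c : ℕ × ℕ} : c ∈ rowD k ↔ c.1 = 0 ∧ c.2 < k := by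
  obtain ⟨c1, c2⟩ := c
  rw [rowD, YoungDiagram.mem_ofRowLens]
  constructor
  · rintro ⟨h1, h2⟩
    simp only [List.length_singleton] at h1
    have hc1 : c1 = 0 := by omega
    subst hc1
    simp only [List.getElem_singleton] at h2
    exact ⟨rfl, h2⟩
  · rintro ⟨h1, h2⟩
    simp only at h1
    subst h1
    exact ⟨by simp, by simpa using h2⟩

lemma colLen_rowD (k j : ℕ) : (rowD k).colLen j = if j < k then 1 else 0 := by
  by_cases h : j < k
  · rw [if_pos h]
    apply YoungDiagram.colLen_eq_of_forall
    · rw [mem_rowD]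
      simp
    · intro i hi
      rw [mem_rowD]
      exact ⟨by omega, h⟩
  · rw [if_neg h]
    apply YoungDiagram.colLen_eq_of_forall
    · rw [mem_rowD]
      simp
      omega
    · intro i hi
      omega

lemma card_rowD (k : ℕ) : (rowD k).card = k := by
  rw [YoungDiagram.card_eq_sum_colLen (rowD k) k (by rw [colLen_rowD]; simp)]
  have h1 : ∀ j ∈ Finset.range k, (rowD k).colLen j = 1 := by
    intro j hj
    rw [colLen_rowD, if_pos (Finset.mem_range.mp hj)]
  rw [Finset.sum_congr rfl h1]
  simp

lemma rowD_le_iff (k : ℕ) (mu : YoungDiagram) : rowD k ≤ mu ↔ k ≤ mu.rowLen 0 := by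
  constructor
  · intro h
    rcases Nat.eq_zero_or_pos k with hk | hk
    · omega
    · have hm : ((0 : ℕ), k - 1) ∈ rowD k := mem_rowD.mpr ⟨rfl, by omega⟩
      have := h hm
      rw [YoungDiagram.mem_iff_lt_rowLen] at this
      omega
  · intro h x hx
    obtain ⟨h1, h2⟩ := mem_rowD.mp hx
    obtain ⟨x1, x2⟩ := x
    simp only at h1 h2
    subst h1
    rw [YoungDiagram.mem_iff_lt_rowLen]
    omega

lemma colLen_bot (j : ℕ) : (⊥ : YoungDiagram).colLen j = 0 := by
  apply YoungDiagram.colLen_eq_of_forall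
  · intro hc
    rw [← YoungDiagram.mem_cells, YoungDiagram.cells_bot] at hc
    exact Finset.notMem_empty _ hc
  · intro i hi
    omega

lemma rowLen_zero_le_card (mu : YoungDiagram) : mu.rowLen 0 ≤ mu.card := by
  rw [YoungDiagram.rowLen_eq_card]
  exact Finset.card_le_card (Finset.filter_subset _ _)

lemma colLen_eq_zero_of_ge (mu : YoungDiagram) {j : ℕ} (h : mu.rowLen 0 ≤ j) :
    mu.colLen j = 0 := by
  by_contra hc
  have h1 : (0, j) ∈ mu := YoungDiagram.mem_iff_lt_colLen.mpr (by omega)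
  rw [YoungDiagram.mem_iff_lt_rowLen] at h1
  omega

lemma zchoose_mul_fact (p : ℤ) (n i : ℕ) (hin : i ≤ n) (hpi : 0 ≤ p + i) :
    (zchoose (p + n) (p + i) : ℚ) * ((n - i).factorial : ℚ)
      = ((p + n).toNat.factorial : ℚ) * fi (p + i) := by
  have hz : zchoose (p + n) (p + i) = ((p + n).toNat.choose (p + i).toNat : ℤ) :=
    if_pos ⟨hpi, by omega⟩
  rw [hz, fi_of_nonneg hpi]
  set N := (p + (n : ℤ)).toNat with hN
  set K := (p + (i : ℤ)).toNat with hK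
  have hKN : K ≤ N := by omega
  have hNK : N - K = n - i := by omega
  have hfact := Nat.choose_mul_factorial_mul_factorial hKN
  rw [hNK] at hfact
  have h2 : ((N.choose K : ℚ)) * ((n - i).factorial : ℚ) * (K.factorial : ℚ)
      = (N.factorial : ℚ) := by
    have := congrArg (Nat.cast : ℕ → ℚ) hfact
    push_cast at this
    linear_combination this
  have h3 : (K.factorial : ℚ) ≠ 0 := Nat.cast_ne_zero.mpr (Nat.factorial_ne_zero _)
  field_simp
  push_cast
  linear_combination h2

/-- the `(ℓ+1)×(ℓ+1)` bordered matrix -/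
noncomputable def WMat (mu : YoungDiagram) (p : ℤ) :
    Matrix (Fin (mu.card + 2)) (Fin (mu.card + 2)) ℚ :=
  fun j k => if (j : ℕ) = 0 then fi (p + (k : ℕ))
    else fi ((mu.colLen ((j : ℕ) - 1) : ℤ) - (j : ℕ) + (k : ℕ))

lemma WMat_zero (mu : YoungDiagram) (p : ℤ) (k : Fin (mu.card + 2)) :
    WMat mu p 0 k = fi (p + (k : ℕ)) := by
  simp [WMat]

lemma WMat_pos (mu : YoungDiagram) (p : ℤ) (j k : Fin (mu.card + 2)) (hj : (j : ℕ) ≠ 0) :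
    WMat mu p j k = fi ((mu.colLen ((j : ℕ) - 1) : ℤ) - (j : ℕ) + (k : ℕ)) := by
  simp only [WMat]
  rw [if_neg hj]

lemma sum_eq_W (mu : YoungDiagram) (p : ℤ) (hp : 0 ≤ p + (mu.card : ℤ)) :
    ((∑ i ∈ Finset.range (mu.card + 1),
        (-1 : ℤ) ^ i * zchoose (p + mu.card) (p + i) * (sytSkew mu (rowD i) : ℤ) : ℤ) : ℚ)
      = (((p + (mu.card : ℤ)).toNat.factorial : ℚ)) * (WMat mu p).det := by
  classical
  set n := mu.card with hn
  set N := (p + (n : ℤ)).toNat with hN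
  have hwidth : mu.rowLen 0 ≤ n := rowLen_zero_le_card mu
  -- the minors of W are the matrices AMat mu (rowD i)
  have hminor : ∀ k : Fin (n + 2),
      (WMat mu p).submatrix Fin.succ k.succAbove = AMat mu (rowD (k : ℕ)) (n + 1) := by
    intro k
    funext j' k'
    show WMat mu p j'.succ (k.succAbove k') = AMat mu (rowD (k : ℕ)) (n + 1) j' k'
    have hj : ((j'.succ : Fin (n + 2)) : ℕ) = (j' : ℕ) + 1 := Fin.val_succ j'
    rw [WMat_pos mu p _ _ (by omega)]
    show fi _ = fi _
    congr 1
    rw [hj, colLen_rowD]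
    by_cases hkk : (k' : ℕ) < (k : ℕ)
    · have hsA : ((k.succAbove k') : ℕ) = (k' : ℕ) := by
        rw [Fin.succAbove_of_castSucc_lt k k' (by rw [Fin.lt_def, Fin.coe_castSucc]; exact hkk)]
        exact Fin.coe_castSucc k'
      rw [hsA, if_pos hkk]
      have h1 : (j' : ℕ) + 1 - 1 = (j' : ℕ) := by omega
      rw [h1]
      push_cast
      ring
    · have hsA : ((k.succAbove k') : ℕ) = (k' : ℕ) + 1 := by
        rw [Fin.succAbove_of_le_castSucc k k' (by rw [Fin.le_def, Fin.coe_castSucc]; omega)]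
        exact Fin.val_succ k'
      rw [hsA, if_neg hkk]
      have h1 : (j' : ℕ) + 1 - 1 = (j' : ℕ) := by omega
      rw [h1]
      push_cast
      ring
  have hdetW : (WMat mu p).det = ∑ k : Fin (n + 2),
      (-1 : ℚ) ^ (k : ℕ) * fi (p + (k : ℕ)) * (AMat mu (rowD (k : ℕ)) (n + 1)).det := by
    rw [Matrix.det_succ_row_zero]
    refine Finset.sum_congr rfl fun k _ => ?_
    rw [hminor k, WMat_zero]
  -- vanishing of the matrices beyond the first row length
  have hvanish : ∀ i : ℕ, mu.rowLen 0 < i → (AMat mu (rowD i) (n + 1)).det = 0 := by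
    intro i hi
    apply AMat_det_eq_zero (⟨mu.rowLen 0, by omega⟩ : Fin (n + 1))
    show mu.colLen (mu.rowLen 0) < (rowD i).colLen (mu.rowLen 0)
    rw [colLen_eq_zero_of_ge mu le_rfl, colLen_rowD, if_pos hi]
    omega
  -- term-by-term identification
  have hterm : ∀ i : ℕ, i < n + 2 →
      (-1 : ℚ) ^ i * (zchoose (p + n) (p + i) : ℚ) * (sytSkew mu (rowD i) : ℚ)
        = (N.factorial : ℚ) * ((-1 : ℚ) ^ i * fi (p + i) * (AMat mu (rowD i) (n + 1)).det) := by
    intro i hi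
    by_cases hpi : 0 ≤ p + i
    · by_cases hiw : i ≤ mu.rowLen 0
      · have hle : rowD i ≤ mu := (rowD_le_iff i mu).mpr hiw
        have hin : i ≤ n := le_trans hiw hwidth
        have hskew : sytSkew mu (rowD i) = sytCountCells (mu.cells \ (rowD i).cells) :=
          if_pos hle
        have hA := aitken (n - i) mu (rowD i) (n + 1) hle
          (by rw [card_rowD]; omega) (colLen_eq_zero_of_ge mu (by omega))
        rw [hskew, hA]
        have hz := zchoose_mul_fact p n i hin hpi
        have hr : (-1 : ℚ) ^ i * (zchoose (p + n) (p + i) : ℚ)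
            * (((n - i).factorial : ℚ) * (AMat mu (rowD i) (n + 1)).det)
            = (-1 : ℚ) ^ i * ((zchoose (p + n) (p + i) : ℚ) * ((n - i).factorial : ℚ))
            * (AMat mu (rowD i) (n + 1)).det := by ring
        rw [hr, hz]
        ring
      · have hskew : sytSkew mu (rowD i) = 0 :=
          if_neg (fun hc => hiw ((rowD_le_iff i mu).mp hc))
        rw [hskew, hvanish i (by omega)]
        push_cast
        ring
    · have hz : zchoose (p + n) (p + i) = 0 := if_neg (fun hc => hpi hc.1)
      have hfi : fi (p + i) = 0 := fi_neg (by omega)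
      rw [hz, hfi]
      push_cast
      ring
  -- assemble
  have hlast : (N.factorial : ℚ) * ((-1 : ℚ) ^ (n + 1) * fi (p + (n + 1 : ℕ))
      * (AMat mu (rowD (n + 1)) (n + 1)).det) = 0 := by
    rw [hvanish (n + 1) (by omega)]
    ring
  rw [hdetW, Finset.mul_sum]
  rw [Fin.sum_univ_eq_sum_range (fun i => (N.factorial : ℚ)
    * ((-1 : ℚ) ^ i * fi (p + (i : ℕ)) * (AMat mu (rowD i) (n + 1)).det)) (n + 2)]
  conv_rhs => rw [Finset.sum_range_succ]
  rw [hlast, add_zero]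
  push_cast
  refine Finset.sum_congr rfl fun i hi => ?_
  have hi2 : i < n + 2 := by
    have := Finset.mem_range.mp hi
    omega
  exact hterm i hi2

lemma nu_exists (mu : YoungDiagram) (p : ℤ) (a : ℕ) (kappa : ℕ → ℤ)
    (hkappa : ∀ i : ℕ, 1 ≤ i → kappa i =
      if i < a then (mu.colLen (i - 1) : ℤ) - 1
      else if i = a then p + a - 1
      else (mu.colLen (i - 2) : ℤ))
    (ha1 : 1 ≤ a) (hamax : a ≤ mu.card + 1)
    (haP : (mu.colLen (a - 1) : ℤ) - a ≤ p)
    (hprev : 2 ≤ a → ¬((mu.colLen (a - 2) : ℤ) - (a - 1) ≤ p))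
    (hne : p ≠ (mu.colLen (a - 1) : ℤ) - a) :
    ∃ nu : YoungDiagram, ∀ i : ℕ, 1 ≤ i → (nu.colLen (i - 1) : ℤ) = kappa i := by
  classical
  set n := mu.card with hn
  have hwidth : mu.rowLen 0 ≤ n := rowLen_zero_le_card mu
  -- values of kappa
  have hval : ∀ i : ℕ, 1 ≤ i → i < a → kappa i = (mu.colLen (i - 1) : ℤ) - 1 := by
    intro i h1 h2
    rw [hkappa i h1, if_pos h2]
  have hvala : kappa a = p + a - 1 := by
    rw [hkappa a (by omega), if_neg (by omega), if_pos rfl]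
  have hvalg : ∀ i : ℕ, a < i → kappa i = (mu.colLen (i - 2) : ℤ) := by
    intro i h2
    rw [hkappa i (by omega), if_neg (by omega), if_neg (by omega)]
  -- adjacent monotonicity
  have hmono : ∀ i : ℕ, 1 ≤ i → kappa (i + 1) ≤ kappa i := by
    intro i hi
    rcases Nat.lt_trichotomy (i + 1) a with h | h | h
    · rw [hval i hi (by omega), hval (i + 1) (by omega) h]
      have := mu.colLen_anti (i - 1) (i + 1 - 1) (by omega)
      omega
    · rw [hval i hi (by omega), show i + 1 = a from h, hvala]
      have h2 := hprev (by omega)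
      have h3 : a - 2 = i - 1 := by omega
      rw [h3] at h2
      push_neg at h2
      omega
    · rcases Nat.lt_trichotomy i a with h' | h' | h'
      · omega
      · subst h'
        rw [hvalg (i + 1) (by omega), hvala]
        have h3 : i + 1 - 2 = i - 1 := by omega
        rw [h3]
        omega
      · rw [hvalg i h', hvalg (i + 1) (by omega)]
        have := mu.colLen_anti (i - 2) (i + 1 - 2) (by omega)
        omega
  have hchain : ∀ i j : ℕ, 1 ≤ i → i ≤ j → kappa j ≤ kappa i := by
    intro i j hi hij
    induction j, hij using Nat.le_induction with
    | base => exact le_refl _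
    | succ j hij ih =>
      have := hmono j (by omega)
      omega
  have hkzero : ∀ i : ℕ, n + 3 ≤ i → kappa i = 0 := by
    intro i hi
    rw [hkappa i (by omega), if_neg (by omega), if_neg (by omega)]
    have h1 : mu.colLen (i - 2) = 0 := colLen_eq_zero_of_ge mu (by omega)
    rw [h1]
    rfl
  have hnonneg : ∀ i : ℕ, 1 ≤ i → 0 ≤ kappa i := by
    intro i hi
    rcases Nat.lt_or_ge i (n + 3) with h | h
    · have := hchain i (n + 3) hi (by omega)
      rw [hkzero (n + 3) le_rfl] at this
      omega
    · rw [hkzero i h]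
  -- build the list of column lengths
  set L : List ℕ := (List.range (n + 2)).map (fun i => (kappa (i + 1)).toNat) with hL
  have hLlen : L.length = n + 2 := by simp [hL]
  have hLsorted : L.SortedGE := by
    refine List.Pairwise.sortedGE (List.Pairwise.map _ ?_ (List.pairwise_le_range (n := n + 2)))
    intro x y hxy
    exact Int.toNat_le_toNat (hchain (x + 1) (y + 1) (by omega) (by omega))
  set nu : YoungDiagram := (YoungDiagram.ofRowLens L hLsorted).transpose with hnu
  refine ⟨nu, ?_⟩
  intro i hi
  have hcol : nu.colLen (i - 1) = (YoungDiagram.ofRowLens L hLsorted).rowLen (i - 1) := by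
    rw [hnu, YoungDiagram.colLen_transpose]
  rcases Nat.lt_or_ge (i - 1) (n + 2) with h | h
  · have hidx : i - 1 < L.length := by omega
    have hrl := YoungDiagram.rowLen_ofRowLens (w := L) (hw := hLsorted) ⟨i - 1, hidx⟩
    rw [hcol, hrl]
    have hget : L[(⟨i - 1, hidx⟩ : Fin L.length)] = (kappa (i - 1 + 1)).toNat := by
      simp [hL]
    rw [hget, show i - 1 + 1 = i from by omega]
    exact Int.toNat_of_nonneg (hnonneg i hi)
  · have hrl : (YoungDiagram.ofRowLens L hLsorted).rowLen (i - 1) = 0 := by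
      have hnm : ((i - 1 : ℕ), (0 : ℕ)) ∉ YoungDiagram.ofRowLens L hLsorted := by
        rw [YoungDiagram.mem_ofRowLens]
        rintro ⟨hlen, -⟩
        rw [hLlen] at hlen
        omega
      rw [YoungDiagram.mem_iff_lt_rowLen] at hnm
      omega
    rw [hcol, hrl, hkzero i (by omega)]
    rfl

lemma card_bot : (⊥ : YoungDiagram).card = 0 := by
  rw [YoungDiagram.card, YoungDiagram.cells_bot]
  rfl


/-- binomial–SYT identity: fix a partition `μ` and `p ∈ ℤ` with
`p + |μ| ≥ 0`; let `a = min{i ≥ 1 : p ≥ μ'_i - i}` and let `κ` record the (1-indexed)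
column lengths of the shape `μ^{(p)}`: `κ i = μ'_i - 1` for `i < a`, `= p + a - 1` for
`i = a`, and `= μ'_{i-1}` for `i > a`. Then
`(-1)^{a+1} f^{μ^{(p)}} = ∑_{i=0}^{|μ|} (-1)^i C(p+|μ|, p+i) f^{μ/(i)}`:
if some Young diagram `ν` has column lengths `κ`, then `(-1)^{a+1} f^ν` equals the
alternating sum, and if no Young diagram has column lengths `κ` (i.e. `μ^{(p)}` is not a
valid shape, so `f^{μ^{(p)}} = 0` by convention) the alternating sum vanishes. -/
theorem binomial_syt_identity (mu : YoungDiagram) (p : ℤ) (hp : 0 ≤ p + mu.card)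
    (a : ℕ) (ha : a = sInf {i : ℕ | 1 ≤ i ∧ (mu.colLen (i - 1) : ℤ) - i ≤ p})
    (kappa : ℕ → ℤ)
    (hkappa : ∀ i : ℕ, 1 ≤ i → kappa i =
      if i < a then (mu.colLen (i - 1) : ℤ) - 1
      else if i = a then p + a - 1
      else (mu.colLen (i - 2) : ℤ)) :
    (∀ nu : YoungDiagram, (∀ i : ℕ, 1 ≤ i → (nu.colLen (i - 1) : ℤ) = kappa i) →
      (-1 : ℤ) ^ (a + 1) * (sytCountCells nu.cells : ℤ) =
        ∑ i ∈ Finset.range (mu.card + 1),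
          (-1 : ℤ) ^ i * zchoose (p + mu.card) (p + i) * (sytSkew mu (rowD i) : ℤ)) ∧
    ((¬ ∃ nu : YoungDiagram, ∀ i : ℕ, 1 ≤ i → (nu.colLen (i - 1) : ℤ) = kappa i) →
      (∑ i ∈ Finset.range (mu.card + 1),
          (-1 : ℤ) ^ i * zchoose (p + mu.card) (p + i) * (sytSkew mu (rowD i) : ℤ)) = 0) := by
  classical
  set n := mu.card with hn
  set N := (p + (n : ℤ)).toNat with hN
  have hwidth : mu.rowLen 0 ≤ n := rowLen_zero_le_card mu
  -- facts about a
  have hmemS : (n + 1) ∈ {i : ℕ | 1 ≤ i ∧ (mu.colLen (i - 1) : ℤ) - i ≤ p} := by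
    simp only [Set.mem_setOf_eq]
    refine ⟨by omega, ?_⟩
    have h1 : mu.colLen (n + 1 - 1) = 0 := colLen_eq_zero_of_ge mu (by omega)
    rw [h1]
    push_cast
    omega
  have haS : a ∈ {i : ℕ | 1 ≤ i ∧ (mu.colLen (i - 1) : ℤ) - i ≤ p} := by
    rw [ha]
    exact Nat.sInf_mem ⟨n + 1, hmemS⟩
  simp only [Set.mem_setOf_eq] at haS
  have ha1 : 1 ≤ a := haS.1
  have haP : (mu.colLen (a - 1) : ℤ) - a ≤ p := haS.2
  have hamax : a ≤ n + 1 := by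
    rw [ha]
    exact Nat.sInf_le hmemS
  have hprev : 2 ≤ a → ¬((mu.colLen (a - 2) : ℤ) - (a - 1) ≤ p) := by
    intro h2 hc
    have hmem2 : a - 1 ∈ {i : ℕ | 1 ≤ i ∧ (mu.colLen (i - 1) : ℤ) - i ≤ p} := by
      simp only [Set.mem_setOf_eq]
      refine ⟨by omega, ?_⟩
      have e1 : a - 1 - 1 = a - 2 := by omega
      have e2 : ((a - 1 : ℕ) : ℤ) = (a : ℤ) - 1 := by omega
      rw [e1, e2]
      omega
    have := ha ▸ Nat.sInf_le hmem2
    omega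
  -- values of kappa
  have hval : ∀ i : ℕ, 1 ≤ i → i < a → kappa i = (mu.colLen (i - 1) : ℤ) - 1 := by
    intro i h1 h2
    rw [hkappa i h1, if_pos h2]
  have hvala : kappa a = p + a - 1 := by
    rw [hkappa a (by omega), if_neg (by omega), if_pos rfl]
  have hvalg : ∀ i : ℕ, a < i → kappa i = (mu.colLen (i - 2) : ℤ) := by
    intro i h2
    rw [hkappa i (by omega), if_neg (by omega), if_neg (by omega)]
  constructor
  · -- part 1
    intro nu hnu
    have hν : ∀ j : ℕ, (nu.colLen j : ℤ) = kappa (j + 1) := by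
      intro j
      have := hnu (j + 1) (by omega)
      simpa using this
    have hνw : nu.colLen (n + 2) = 0 := by
      have h1 := hν (n + 2)
      rw [hvalg (n + 2 + 1) (by omega)] at h1
      have h2 : mu.colLen (n + 2 + 1 - 2) = 0 := colLen_eq_zero_of_ge mu (by omega)
      rw [h2] at h1
      omega
    -- the cardinality of nu
    have hcard2 : (nu.card : ℤ) = ∑ j ∈ Finset.range (n + 2), kappa (j + 1) := by
      rw [YoungDiagram.card_eq_sum_colLen nu (n + 2) hνw]
      push_cast
      exact Finset.sum_congr rfl fun j _ => hν j
    have hmucard : ((n : ℤ)) = ∑ j ∈ Finset.range (n + 1), (mu.colLen j : ℤ) := by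
      have h0 := YoungDiagram.card_eq_sum_colLen mu (n + 1) (colLen_eq_zero_of_ge mu (by omega))
      rw [hn]
      exact_mod_cast congrArg (Nat.cast : ℕ → ℤ) h0
    set b := a - 1 with hb
    have hsplit : ∑ j ∈ Finset.range (n + 2), kappa (j + 1)
        = (∑ j ∈ Finset.range b, kappa (j + 1)) + ∑ j ∈ Finset.Ico b (n + 2), kappa (j + 1) :=
      (Finset.sum_range_add_sum_Ico _ (by omega)).symm
    have h1 : ∑ j ∈ Finset.range b, kappa (j + 1)
        = ∑ j ∈ Finset.range b, ((mu.colLen j : ℤ) - 1) := by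
      refine Finset.sum_congr rfl fun j hj => ?_
      have hjb := Finset.mem_range.mp hj
      rw [hval (j + 1) (by omega) (by omega)]
      simp
    have h1' : ∑ j ∈ Finset.range b, ((mu.colLen j : ℤ) - 1)
        = (∑ j ∈ Finset.range b, (mu.colLen j : ℤ)) - b := by
      rw [Finset.sum_sub_distrib]
      simp
    have h2 : ∑ j ∈ Finset.Ico b (n + 2), kappa (j + 1)
        = kappa (b + 1) + ∑ j ∈ Finset.Ico (b + 1) (n + 2), kappa (j + 1) :=
      Finset.sum_eq_sum_Ico_succ_bot (by omega) _
    have h3 : ∑ j ∈ Finset.Ico (b + 1) (n + 2), kappa (j + 1)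
        = ∑ j ∈ Finset.Ico b (n + 1), (mu.colLen j : ℤ) := by
      rw [Finset.sum_Ico_eq_sum_range, Finset.sum_Ico_eq_sum_range]
      have hlen : n + 2 - (b + 1) = n + 1 - b := by omega
      rw [hlen]
      refine Finset.sum_congr rfl fun k hk => ?_
      rw [hvalg (b + 1 + k + 1) (by omega)]
      have hidx : b + 1 + k + 1 - 2 = b + k := by omega
      rw [hidx]
    have h4 : kappa (b + 1) = p + a - 1 := by
      rw [show b + 1 = a from by omega]
      exact hvala
    have h5 : (∑ j ∈ Finset.range b, (mu.colLen j : ℤ))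
        + ∑ j ∈ Finset.Ico b (n + 1), (mu.colLen j : ℤ) = (n : ℤ) := by
      rw [Finset.sum_range_add_sum_Ico _ (by omega), ← hmucard]
    have hνcard : (nu.card : ℤ) = p + n := by
      rw [hcard2, hsplit, h1, h1', h2, h3, h4]
      omega
    have hcardN : nu.card = N := by omega
    -- Aitken for nu
    have hA := aitken N nu ⊥ (n + 2) bot_le (by rw [card_bot]; omega) hνw
    rw [YoungDiagram.cells_bot, Finset.sdiff_empty] at hA
    -- identify the matrix with a row permutation of W
    set d : Fin (n + 2) := ⟨a - 1, by omega⟩ with hd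
    have hdval : (d : ℕ) = a - 1 := rfl
    have hperm : AMat nu ⊥ (n + 2) = (WMat mu p).submatrix (d.cycleRange) id := by
      funext j k
      show fi ((nu.colLen (j : ℕ) : ℤ) - (j : ℕ) + (k : ℕ) - ((⊥ : YoungDiagram).colLen (k : ℕ)))
        = WMat mu p (d.cycleRange j) k
      rw [colLen_bot]
      rcases lt_trichotomy j d with hj | hj | hj
      · have hjv : (j : ℕ) < a - 1 := by
          have := Fin.lt_def.mp hj
          omega
        rw [Fin.cycleRange_of_lt hj]
        have hv : ((j + 1 : Fin (n + 2)) : ℕ) = (j : ℕ) + 1 :=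
          Fin.val_add_one_of_lt (lt_of_lt_of_le hj (Fin.le_last d))
        rw [WMat_pos mu p _ k (by rw [hv]; omega)]
        congr 1
        rw [hv]
        have h6 := hν (j : ℕ)
        rw [hval ((j : ℕ) + 1) (by omega) (by omega)] at h6
        have h7 : (j : ℕ) + 1 - 1 = (j : ℕ) := by omega
        rw [h7] at h6
        push_cast
        omega
      · rw [hj, Fin.cycleRange_self, WMat_zero]
        congr 1
        have h6 := hν (d : ℕ)
        have h7 : (d : ℕ) + 1 = a := by omega
        rw [h7, hvala] at h6
        rw [hj] at *
        push_cast [hdval]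
        push_cast [hdval] at h6
        omega
      · have hjv : a - 1 < (j : ℕ) := by
          have := Fin.lt_def.mp hj
          omega
        rw [Fin.cycleRange_of_gt hj]
        rw [WMat_pos mu p _ k (by omega)]
        congr 1
        have h6 := hν (j : ℕ)
        rw [hvalg ((j : ℕ) + 1) (by omega)] at h6
        have h7 : (j : ℕ) + 1 - 2 = (j : ℕ) - 1 := by omega
        rw [h7] at h6
        have h8 : (1 : ℕ) ≤ (j : ℕ) := by omega
        push_cast [Nat.cast_sub h8]
        push_cast at h6
        omega
    rw [hperm] at hA
    have hsign := Matrix.det_permute (d.cycleRange) (WMat mu p)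
    rw [hsign] at hA
    have hsgn : (((Equiv.Perm.sign d.cycleRange : ℤˣ) : ℤ) : ℚ) = (-1 : ℚ) ^ (a - 1) := by
      rw [Fin.sign_cycleRange, hdval]
      push_cast
      norm_num
    have hsum := sum_eq_W mu p hp
    have hpow : ((-1 : ℚ)) ^ (a + 1) * ((-1 : ℚ)) ^ (a - 1) = 1 := by
      rw [← pow_add]
      have he : (a + 1) + (a - 1) = 2 * a := by omega
      rw [he, pow_mul]
      norm_num
    have hQ : ((-1 : ℚ)) ^ (a + 1) * (sytCountCells nu.cells : ℚ)
        = ((∑ i ∈ Finset.range (n + 1),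
            (-1 : ℤ) ^ i * zchoose (p + n) (p + i) * (sytSkew mu (rowD i) : ℤ) : ℤ) : ℚ) := by
      rw [hsum]
      calc ((-1 : ℚ)) ^ (a + 1) * (sytCountCells nu.cells : ℚ)
          = ((-1 : ℚ)) ^ (a + 1) * ((N.factorial : ℚ)
            * ((((Equiv.Perm.sign d.cycleRange : ℤˣ) : ℤ) : ℚ) * (WMat mu p).det)) := by
            rw [← hA]
        _ = (((-1 : ℚ)) ^ (a + 1) * ((-1 : ℚ)) ^ (a - 1))
            * ((N.factorial : ℚ) * (WMat mu p).det) := by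
            rw [hsgn]
            ring
        _ = (N.factorial : ℚ) * (WMat mu p).det := by
            rw [hpow]
            ring
    exact_mod_cast hQ
  · -- part 2
    intro hno
    have hpa : p = (mu.colLen (a - 1) : ℤ) - a := by
      by_contra hne
      exact hno (nu_exists mu p a kappa hkappa ha1 hamax haP hprev hne)
    have haf : a < n + 2 := by omega
    have hdet0 : (WMat mu p).det = 0 := by
      apply Matrix.det_zero_of_row_eq (i := (⟨a, haf⟩ : Fin (n + 2))) (j := (0 : Fin (n + 2)))
      · intro hc
        have := congrArg Fin.val hc
        simp at this
        omega
      · funext k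
        have h1 : WMat mu p ⟨a, haf⟩ k
            = fi ((mu.colLen (a - 1) : ℤ) - (a : ℕ) + (k : ℕ)) :=
          WMat_pos mu p ⟨a, haf⟩ k (by show a ≠ 0; omega)
        rw [h1, WMat_zero]
        congr 1
        omega
    have hsum := sum_eq_W mu p hp
    rw [hdet0, mul_zero] at hsum
    exact_mod_cast hsum
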